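/- Let (Y_1,…,Y_{n+1}) be a Σ_q-family on a complex Hilbert space H and let ξ∈H be a unit vector with Y_iξ = 0 for all 1≤i≤n and Y_{n+1}ξ = λξ for some λ∈ℂ with |λ| = 1. For k∈ℕⁿ define |k⟩_ξ := ((q²;q²)_{k_1}⋯(q²;q²)_{k_{n-1}}(q⁴;q⁴)_{k_n})^{-1/2} (Y_1*)^{k_1}⋯(Y_n*)^{k_n} ξ. Then the family {|k⟩_ξ : k∈ℕⁿ} is orthonormal: ⟨|j⟩_ξ, |k⟩_ξ⟩ = δ_{jk} for all j,k∈ℕⁿ. -/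

import Mathlib

open ContinuousLinearMap

noncomputable section

abbrev lpH (n : ℕ) : Type := lp (fun _ : Fin n → ℕ => ℂ) 2

def basisE {n : ℕ} (k : Fin n → ℕ) : lpH n := lp.single 2 k 1

/-- A `Σ_q`-family: relations (R1)-(R5). Index `i : Fin (n+1)` corresponds to `Y_{i+1}`. -/
def IsSigmaQFamily (q : ℝ) {n : ℕ} {H : Type*} [NormedAddCommGroup H]
    [InnerProductSpace ℂ H] [CompleteSpace H]
    (Y : Fin (n + 1) → H →L[ℂ] H) : Prop :=
  (∀ i j : Fin (n + 1), j < i → ¬((i : ℕ) = n ∧ (j : ℕ) + 1 = n) →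
      Y i * Y j = ((q : ℂ))⁻¹ • (Y j * Y i) ∧
      adjoint (Y i) * Y j = ((q : ℂ))⁻¹ • (Y j * adjoint (Y i))) ∧
  (∀ j : Fin (n + 1), (j : ℕ) + 1 = n →
      Y (Fin.last n) * Y j = (((q : ℂ))⁻¹ ^ 2) • (Y j * Y (Fin.last n)) ∧
      adjoint (Y (Fin.last n)) * Y j = (((q : ℂ))⁻¹ ^ 2) • (Y j * adjoint (Y (Fin.last n)))) ∧
  (∀ i : Fin (n + 1), (i : ℕ) + 1 ≠ n →
      Y i * adjoint (Y i) - adjoint (Y i) * Y i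
        = ((1 - q ^ 2 : ℝ) : ℂ) • ∑ k ∈ Finset.Ioi i, adjoint (Y k) * Y k) ∧
  (∀ i : Fin (n + 1), (i : ℕ) + 1 = n →
      Y i * adjoint (Y i) - adjoint (Y i) * Y i
        = ((1 - q ^ 4 : ℝ) : ℂ) • (adjoint (Y (Fin.last n)) * Y (Fin.last n))) ∧
  (∑ i, adjoint (Y i) * Y i = 1)

/-- The representation `π_λ` on `ℓ²(ℕⁿ)`, described by its action on the canonical
orthonormal basis. Index `i : Fin n` (via `castSucc`) corresponds to `Y_{i+1}`,
and `Fin.last n` corresponds to `Y_{n+1}`. -/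
def IsPiRep (q : ℝ) {n : ℕ} (lam : ℂ) (Y : Fin (n + 1) → lpH n →L[ℂ] lpH n) : Prop :=
  (∀ i : Fin n, (i : ℕ) + 1 < n → ∀ k : Fin n → ℕ,
      Y i.castSucc (basisE k)
        = ((q ^ (∑ j ∈ Finset.Iio i, k j) * Real.sqrt (1 - q ^ (2 * k i)) : ℝ) : ℂ)
            • basisE (Function.update k i (k i - 1))) ∧
  (∀ i : Fin n, (i : ℕ) + 1 = n → ∀ k : Fin n → ℕ,
      Y i.castSucc (basisE k)
        = ((q ^ (∑ j ∈ Finset.Iio i, k j) * Real.sqrt (1 - q ^ (4 * k i)) : ℝ) : ℂ)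
            • basisE (Function.update k i (k i - 1))) ∧
  (∀ k : Fin n → ℕ,
      Y (Fin.last n) (basisE k)
        = (lam * (q : ℂ) ^ (∑ j : Fin n, if (j : ℕ) + 1 = n then 2 * k j else k j))
            • basisE k)

/-- Irreducibility: the only closed invariant subspaces are `⊥` and `⊤`. -/
def IsIrreducibleFamily {n : ℕ} {H : Type*} [NormedAddCommGroup H]
    [InnerProductSpace ℂ H] [CompleteSpace H]
    (Y : Fin (n + 1) → H →L[ℂ] H) : Prop :=
  ∀ V : Submodule ℂ H, IsClosed (V : Set H) →
    (∀ i : Fin (n + 1), ∀ v ∈ V, Y i v ∈ V ∧ adjoint (Y i) v ∈ V) →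
    V = ⊥ ∨ V = ⊤
/-- The q-shifted factorial `(a;b)_ℓ = ∏_{i=0}^{ℓ-1} (1 - a bⁱ)`. -/
def qPoch (a b : ℝ) (l : ℕ) : ℝ := ∏ i ∈ Finset.range l, (1 - a * b ^ i)

/-- The vector `|k⟩_ξ`. -/
def ket (q : ℝ) {n : ℕ} {H : Type*} [NormedAddCommGroup H]
    [InnerProductSpace ℂ H] [CompleteSpace H]
    (Y : Fin (n + 1) → H →L[ℂ] H) (ξ : H) (k : Fin n → ℕ) : H :=
  (((Real.sqrt (∏ i : Fin n,
      if (i : ℕ) + 1 = n then qPoch (q ^ 4) (q ^ 4) (k i) else qPoch (q ^ 2) (q ^ 2) (k i)))⁻¹ : ℝ) : ℂ) •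
    (List.ofFn fun i : Fin n => (adjoint (Y i.castSucc)) ^ (k i)).prod ξ

set_option linter.unusedSectionVars false
set_option linter.unnecessarySeqFocus false
set_option maxHeartbeats 1000000


section Helpers
variable {n : ℕ} {H : Type*} [NormedAddCommGroup H] [InnerProductSpace ℂ H] [CompleteSpace H]

lemma mul_pow_swap {A B : H →L[ℂ] H} {c : ℂ} (h : A * B = c • (B * A)) (m : ℕ) :
    A * B ^ m = c ^ m • (B ^ m * A) := by
  induction m with
  | zero => simp
  | succ m ih =>
    calc A * B ^ (m+1) = (A * B ^ m) * B := by rw [pow_succ, mul_assoc]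
    _ = c ^ m • (B ^ m * (A * B)) := by rw [ih, smul_mul_assoc, mul_assoc]
    _ = c ^ m • (B ^ m * (c • (B * A))) := by rw [h]
    _ = c ^ (m+1) • (B ^ (m+1) * A) := by
        rw [mul_smul_comm, smul_smul, pow_succ, mul_comm (c^m) c, pow_succ, mul_assoc]

lemma mul_list_swap (A : H →L[ℂ] H) :
    ∀ l : List ((H →L[ℂ] H) × ℂ), (∀ p ∈ l, A * p.1 = p.2 • (p.1 * A)) →
      A * (l.map Prod.fst).prod = (l.map Prod.snd).prod • ((l.map Prod.fst).prod * A)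
  | [], _ => by simp
  | p :: l, h => by
    have hp := h p List.mem_cons_self
    have hl := mul_list_swap A l (fun x hx => h x (List.mem_cons_of_mem p hx))
    simp only [List.map_cons, List.prod_cons]
    calc A * (p.1 * (l.map Prod.fst).prod) = (A * p.1) * (l.map Prod.fst).prod := by
          rw [mul_assoc]
    _ = p.2 • (p.1 * (A * (l.map Prod.fst).prod)) := by rw [hp, smul_mul_assoc, mul_assoc]
    _ = p.2 • (p.1 * ((l.map Prod.snd).prod • ((l.map Prod.fst).prod * A))) := by rw [hl]
    _ = (p.2 * (l.map Prod.snd).prod) • (p.1 * (l.map Prod.fst).prod * A) := by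
        rw [mul_smul_comm, smul_smul, mul_assoc]

/-- The operator `(Y₁*)^{k₁} ⋯ (Yₙ*)^{kₙ}`. -/
def Wop (Y : Fin (n + 1) → H →L[ℂ] H) (k : Fin n → ℕ) : H →L[ℂ] H :=
  (List.ofFn fun i : Fin n => (adjoint (Y i.castSucc)) ^ (k i)).prod

variable {Y : Fin (n + 1) → H →L[ℂ] H}

lemma Wop_eq_one {k : Fin n → ℕ} (h : ∀ i, k i = 0) : Wop Y k = 1 := by
  refine List.prod_eq_one fun x hx => ?_
  rw [List.mem_ofFn] at hx
  obtain ⟨i, rfl⟩ := hx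
  simp [h i]

lemma take_prod_one (f : Fin n → H →L[ℂ] H) (c : ℕ) (h : ∀ j : Fin n, (j : ℕ) < c → f j = 1) :
    ((List.ofFn f).take c).prod = 1 := by
  have : (List.ofFn f).take c = List.replicate (min c n) 1 := by
    apply List.ext_getElem
    · simp
    · intro m h1 h2
      simp only [List.length_take, List.length_ofFn] at h1
      rw [List.getElem_take, List.getElem_ofFn, List.getElem_replicate]
      exact h _ (lt_of_lt_of_le h1 (min_le_left _ _))
  rw [this, List.prod_replicate, one_pow]

lemma drop_prod_one (f : Fin n → H →L[ℂ] H) (c : ℕ) (h : ∀ j : Fin n, c ≤ (j : ℕ) → f j = 1) :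
    ((List.ofFn f).drop c).prod = 1 := by
  have : (List.ofFn f).drop c = List.replicate (n - c) 1 := by
    apply List.ext_getElem
    · simp
    · intro m h1 h2
      rw [List.getElem_drop, List.getElem_ofFn, List.getElem_replicate]
      exact h _ (Nat.le_add_right _ _)
  rw [this, List.prod_replicate, one_pow]

lemma take_congr (f g : Fin n → H →L[ℂ] H) (c : ℕ) (h : ∀ j : Fin n, (j : ℕ) < c → f j = g j) :
    (List.ofFn f).take c = (List.ofFn g).take c := by
  apply List.ext_getElem
  · simp
  · intro m h1 h2
    simp only [List.length_take, List.length_ofFn] at h1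
    rw [List.getElem_take, List.getElem_take, List.getElem_ofFn, List.getElem_ofFn]
    exact h _ (lt_of_lt_of_le h1 (min_le_left _ _))

lemma drop_congr (f g : Fin n → H →L[ℂ] H) (c : ℕ) (h : ∀ j : Fin n, c ≤ (j : ℕ) → f j = g j) :
    (List.ofFn f).drop c = (List.ofFn g).drop c := by
  apply List.ext_getElem
  · simp
  · intro m h1 h2
    rw [List.getElem_drop, List.getElem_drop, List.getElem_ofFn, List.getElem_ofFn]
    exact h _ (Nat.le_add_right _ _)

lemma Wop_split (k : Fin n → ℕ) (c : ℕ) :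
    Wop Y k = Wop Y (fun j => if (j : ℕ) < c then k j else 0) *
      Wop Y (fun j => if (j : ℕ) < c then 0 else k j) := by
  set B : Fin n → H →L[ℂ] H := fun i => (adjoint (Y i.castSucc)) ^ (k i) with hB
  have h1 : Wop Y (fun j => if (j : ℕ) < c then k j else 0)
      = ((List.ofFn B).take c).prod := by
    rw [Wop, ← List.prod_take_mul_prod_drop _ c]
    rw [take_congr (fun i => (adjoint (Y i.castSucc)) ^ (if (i:ℕ) < c then k i else 0)) B c
      (fun j hj => by simp [hB, if_pos hj])]
    rw [drop_prod_one _ c (fun j hj => by simp [Nat.not_lt.mpr hj]), mul_one]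
  have h2 : Wop Y (fun j => if (j : ℕ) < c then 0 else k j)
      = ((List.ofFn B).drop c).prod := by
    rw [Wop, ← List.prod_take_mul_prod_drop _ c]
    rw [drop_congr (fun i => (adjoint (Y i.castSucc)) ^ (if (i:ℕ) < c then 0 else k i)) B c
      (fun j hj => by simp [hB, if_neg (Nat.not_lt.mpr hj)])]
    rw [take_prod_one _ c (fun j hj => by simp [if_pos hj]), one_mul]
  rw [h1, h2, List.prod_take_mul_prod_drop, Wop]


lemma Wop_single (i : Fin n) (m : ℕ) :
    Wop Y (fun j => if j = i then m else 0) = (adjoint (Y i.castSucc)) ^ m := by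
  set f : Fin n → H →L[ℂ] H :=
    fun j => (adjoint (Y j.castSucc)) ^ (if j = i then m else 0) with hf
  have hlen : (i : ℕ) < (List.ofFn f).length := by simp [i.isLt]
  rw [Wop, ← List.prod_take_mul_prod_drop _ (i : ℕ),
    take_prod_one f i (fun j hj => by
      have hne : j ≠ i := by rintro rfl; omega
      simp [hf, hne]), one_mul,
    List.drop_eq_getElem_cons hlen, List.prod_cons,
    drop_prod_one f ((i : ℕ) + 1) (fun j hj => by
      have hne : j ≠ i := by rintro rfl; omega
      simp [hf, hne]), mul_one]
  simp [hf]

lemma Wop_extract {k : Fin n → ℕ} {i : Fin n} (hk : ∀ j, j < i → k j = 0) :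
    Wop Y k = (adjoint (Y i.castSucc)) ^ (k i) * Wop Y (Function.update k i 0) := by
  have hsplit := Wop_split (Y := Y) k ((i : ℕ) + 1)
  have h1 : (fun j : Fin n => if (j : ℕ) < (i : ℕ) + 1 then k j else 0)
      = fun j => if j = i then k i else 0 := by
    funext j
    rcases lt_trichotomy j i with h | h | h
    · rw [if_pos (by omega : (j:ℕ) < (i:ℕ)+1), if_neg (Fin.ne_of_lt h), hk j h]
    · subst h; simp
    · rw [if_neg (by have := (Fin.lt_iff_val_lt_val).mp h; omega),
        if_neg (Fin.ne_of_gt h)]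
  have h2 : (fun j : Fin n => if (j : ℕ) < (i : ℕ) + 1 then 0 else k j)
      = Function.update k i 0 := by
    funext j
    rcases lt_trichotomy j i with h | h | h
    · rw [if_pos (by have := (Fin.lt_iff_val_lt_val).mp h; omega),
        Function.update_apply, if_neg (Fin.ne_of_lt h), hk j h]
    · subst h; simp
    · rw [if_neg (by have := (Fin.lt_iff_val_lt_val).mp h; omega),
        Function.update_apply, if_neg (Fin.ne_of_gt h)]
  rw [hsplit, h1, h2, Wop_single]

lemma Wop_extract_one {k : Fin n → ℕ} {i : Fin n} (hk : ∀ j, j < i → k j = 0)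
    (h0 : k i ≠ 0) :
    Wop Y k = adjoint (Y i.castSucc) * Wop Y (Function.update k i (k i - 1)) := by
  have hk' : ∀ j, j < i → Function.update k i (k i - 1) j = 0 := fun j hj => by
    rw [Function.update_apply, if_neg (Fin.ne_of_lt hj)]; exact hk j hj
  rw [Wop_extract (Y := Y) hk, Wop_extract (Y := Y) hk',
    Function.update_idem, Function.update_self]
  rw [← mul_assoc, ← pow_succ']
  congr 2
  omega

lemma mul_Wop_swap (A : H →L[ℂ] H) (k : Fin n → ℕ) (c : Fin n → ℂ)
    (h : ∀ i : Fin n, A * (adjoint (Y i.castSucc)) ^ (k i)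
      = c i • ((adjoint (Y i.castSucc)) ^ (k i) * A)) :
    A * Wop Y k = (∏ i, c i) • (Wop Y k * A) := by
  have := mul_list_swap A
    (List.ofFn fun i : Fin n => ((adjoint (Y i.castSucc)) ^ (k i), c i))
    (by
      intro p hp
      rw [List.mem_ofFn] at hp
      obtain ⟨i, rfl⟩ := hp
      exact h i)
  simp only [List.map_ofFn, Function.comp_def] at this
  rw [Wop]
  convert this using 3 <;> rw [← List.prod_ofFn] <;> rfl
end Helpers

section Moves
variable {q : ℝ} {n : ℕ} {H : Type*} [NormedAddCommGroup H] [InnerProductSpace ℂ H]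
  [CompleteSpace H] {Y : Fin (n + 1) → H →L[ℂ] H}

lemma flip_eq {P Q : H →L[ℂ] H} {c : ℂ} (hc : c ≠ 0) (h : P = c⁻¹ • Q) : Q = c • P := by
  rw [h, smul_smul, mul_inv_cancel₀ hc, one_smul]

lemma moveY (hq0 : 0 < q) (hY : IsSigmaQFamily q Y) (a : Fin (n + 1)) (b : Fin n)
    (hab : a ≠ b.castSucc) (hs : ¬((a : ℕ) = n ∧ (b : ℕ) + 1 = n)) :
    Y a * adjoint (Y b.castSucc) = (q : ℂ) • (adjoint (Y b.castSucc) * Y a) := by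
  have hqne : (q : ℂ) ≠ 0 := by exact_mod_cast ne_of_gt hq0
  rcases lt_or_gt_of_ne hab with h | h
  · have hs' : ¬(((b.castSucc : Fin (n + 1)) : ℕ) = n ∧ (a : ℕ) + 1 = n) := by
      simp only [Fin.coe_castSucc]
      exact fun hc => absurd hc.1 (Nat.ne_of_lt b.isLt)
    exact flip_eq hqne (hY.1 b.castSucc a h hs').2
  · have hst := congrArg star (hY.1 a b.castSucc h (by simpa using hs)).2
    simp only [star_mul, star_smul, star_eq_adjoint, adjoint_adjoint, Complex.star_def,
      map_inv₀, Complex.conj_ofReal] at hst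
    exact flip_eq hqne hst

lemma moveYadj (hq0 : 0 < q) (hY : IsSigmaQFamily q Y) (a : Fin (n + 1)) (b : Fin n)
    (hab : b.castSucc < a) (hs : ¬((a : ℕ) = n ∧ (b : ℕ) + 1 = n)) :
    adjoint (Y a) * adjoint (Y b.castSucc)
      = (q : ℂ) • (adjoint (Y b.castSucc) * adjoint (Y a)) := by
  have hqne : (q : ℂ) ≠ 0 := by exact_mod_cast ne_of_gt hq0
  have hst := congrArg star (hY.1 a b.castSucc hab (by simpa using hs)).1
  simp only [star_mul, star_smul, star_eq_adjoint, Complex.star_def,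
    map_inv₀, Complex.conj_ofReal] at hst
  exact flip_eq hqne hst

lemma moveLast (hq0 : 0 < q) (hY : IsSigmaQFamily q Y) (b : Fin n)
    (hb : (b : ℕ) + 1 = n) :
    Y (Fin.last n) * adjoint (Y b.castSucc)
      = ((q : ℂ) ^ 2) • (adjoint (Y b.castSucc) * Y (Fin.last n)) := by
  have hqne : (q : ℂ) ^ 2 ≠ 0 := pow_ne_zero _ (by exact_mod_cast ne_of_gt hq0)
  have hst := congrArg star (hY.2.1 b.castSucc (by simpa using hb)).2
  simp only [star_mul, star_smul, star_eq_adjoint, adjoint_adjoint, Complex.star_def,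
    map_pow, map_inv₀, Complex.conj_ofReal] at hst
  rw [inv_pow] at hst
  exact flip_eq hqne hst

lemma moveLastAdj (hq0 : 0 < q) (hY : IsSigmaQFamily q Y) (b : Fin n)
    (hb : (b : ℕ) + 1 = n) :
    adjoint (Y (Fin.last n)) * adjoint (Y b.castSucc)
      = ((q : ℂ) ^ 2) • (adjoint (Y b.castSucc) * adjoint (Y (Fin.last n))) := by
  have hqne : (q : ℂ) ^ 2 ≠ 0 := pow_ne_zero _ (by exact_mod_cast ne_of_gt hq0)
  have hst := congrArg star (hY.2.1 b.castSucc (by simpa using hb)).1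
  simp only [star_mul, star_smul, star_eq_adjoint, Complex.star_def,
    map_pow, map_inv₀, Complex.conj_ofReal] at hst
  rw [inv_pow] at hst
  exact flip_eq hqne hst

end Moves

section Main
variable {q : ℝ} {n : ℕ} {H : Type*} [NormedAddCommGroup H] [InnerProductSpace ℂ H]
  [CompleteSpace H] {Y : Fin (n + 1) → H →L[ℂ] H} {ξ : H} {lam : ℂ}

lemma annY (hq0 : 0 < q) (hY : IsSigmaQFamily q Y) (hann : ∀ i : Fin n, Y i.castSucc ξ = 0)
    (a : Fin n) (k : Fin n → ℕ) (ha : k a = 0) : Y a.castSucc (Wop Y k ξ) = 0 := by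
  have hop : Y a.castSucc * Wop Y k
      = (∏ i, ((q : ℂ)) ^ (k i)) • (Wop Y k * Y a.castSucc) := by
    apply mul_Wop_swap
    intro i
    by_cases hia : i = a
    · subst hia; rw [ha]; simp
    · exact mul_pow_swap (moveY hq0 hY a.castSucc i
        (fun h => hia (Fin.castSucc_injective n h).symm)
        (by simp only [Fin.coe_castSucc]
            exact fun hc => absurd hc.1 (Nat.ne_of_lt a.isLt))) _
  have happ := congrArg (fun T : H →L[ℂ] H => T ξ) hop
  simpa [ContinuousLinearMap.mul_apply, hann a] using happ

lemma T_fix (hq0 : 0 < q) (hY : IsSigmaQFamily q Y)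
    (hann : ∀ i : Fin n, Y i.castSucc ξ = 0) (i : Fin n) (k : Fin n → ℕ)
    (hk : ∀ j, j ≤ i → k j = 0) :
    (∑ m ∈ Finset.Ioi i.castSucc, adjoint (Y m) * Y m) (Wop Y k ξ) = Wop Y k ξ := by
  have hdisj : Disjoint (Finset.Iic i.castSucc) (Finset.Ioi i.castSucc) :=
    Finset.disjoint_left.mpr fun x hx hx' =>
      absurd (Finset.mem_Ioi.mp hx') (not_lt.mpr (Finset.mem_Iic.mp hx))
  have hunion : Finset.Iic i.castSucc ∪ Finset.Ioi i.castSucc = Finset.univ := by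
    ext x; simp [le_or_gt]
  have hsum : (∑ m ∈ Finset.Iic i.castSucc, adjoint (Y m) * Y m)
      + (∑ m ∈ Finset.Ioi i.castSucc, adjoint (Y m) * Y m) = 1 := by
    rw [← Finset.sum_union hdisj, hunion]
    exact hY.2.2.2.2
  have happ := congrArg (fun T : H →L[ℂ] H => T (Wop Y k ξ)) hsum
  simp only [ContinuousLinearMap.add_apply, ContinuousLinearMap.one_apply] at happ
  have hzero : (∑ m ∈ Finset.Iic i.castSucc, adjoint (Y m) * Y m) (Wop Y k ξ) = 0 := by
    rw [ContinuousLinearMap.sum_apply]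
    apply Finset.sum_eq_zero
    intro m hm
    have hmle : m ≤ i.castSucc := Finset.mem_Iic.mp hm
    have hmne : m ≠ Fin.last n :=
      Fin.ne_of_lt (lt_of_le_of_lt hmle (Fin.castSucc_lt_last i))
    obtain ⟨b, rfl⟩ := Fin.exists_castSucc_eq.mpr hmne
    have hble : b ≤ i := by
      rwa [Fin.castSucc_le_castSucc_iff] at hmle
    rw [ContinuousLinearMap.mul_apply, annY hq0 hY hann b k (hk b hble), map_zero]
  rw [hzero, zero_add] at happ
  exact happ

lemma adj_last_fix (hY : IsSigmaQFamily q Y) (hξn : ‖ξ‖ = 1)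
    (hev : Y (Fin.last n) ξ = lam • ξ) (hlam : ‖lam‖ = 1) :
    adjoint (Y (Fin.last n)) ξ = (starRingEnd ℂ) lam • ξ := by
  set A := Y (Fin.last n) with hA
  have hnormal : A * adjoint A = adjoint A * A := by
    have h3 := hY.2.2.1 (Fin.last n) (by simp)
    have hempty : Finset.Ioi (Fin.last n) = ∅ :=
      Finset.eq_empty_of_forall_notMem fun m hm =>
        absurd (Finset.mem_Ioi.mp hm) (not_lt.mpr (Fin.le_last m))
    rw [hempty, Finset.sum_empty, smul_zero, sub_eq_zero] at h3
    exact h3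
  have habs : lam * (starRingEnd ℂ) lam = 1 := by
    rw [Complex.mul_conj, Complex.normSq_eq_norm_sq, hlam]
    norm_num
  have hinner : (inner ℂ ξ ξ : ℂ) = 1 := by
    rw [inner_self_eq_norm_sq_to_K, hξn]; norm_num
  have hAA : A (adjoint A ξ) = lam • adjoint A ξ := by
    have : A (adjoint A ξ) = (A * adjoint A) ξ := rfl
    rw [this, hnormal, ContinuousLinearMap.mul_apply, hev, map_smul]
  set d := adjoint A ξ - (starRingEnd ℂ) lam • ξ with hd
  have e1 : (inner ℂ (adjoint A ξ) (adjoint A ξ) : ℂ) = 1 := by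
    rw [adjoint_inner_left, hAA, inner_smul_right, adjoint_inner_right, hev,
      inner_smul_left, hinner]
    linear_combination habs
  have e2 : (inner ℂ (adjoint A ξ) ((starRingEnd ℂ) lam • ξ) : ℂ) = 1 := by
    rw [inner_smul_right, adjoint_inner_left, hev, inner_smul_right, hinner]
    linear_combination habs
  have e3 : (inner ℂ ((starRingEnd ℂ) lam • ξ) (adjoint A ξ) : ℂ) = 1 := by
    rw [inner_smul_left, adjoint_inner_right, hev, inner_smul_left, hinner,
      Complex.conj_conj]
    linear_combination habs
  have e4 : (inner ℂ ((starRingEnd ℂ) lam • ξ) ((starRingEnd ℂ) lam • ξ) : ℂ) = 1 := by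
    rw [inner_smul_left, inner_smul_right, hinner, Complex.conj_conj]
    linear_combination habs
  have hip : (inner ℂ d d : ℂ) = 0 := by
    rw [hd, inner_sub_left, inner_sub_right, inner_sub_right, e1, e2, e3, e4]
    ring
  rw [inner_self_eq_zero] at hip
  rw [hd, sub_eq_zero] at hip
  exact hip

/-- The lowering coefficient. -/
def cf (q : ℝ) (n : ℕ) (i : Fin n) (m : ℕ) : ℝ :=
  if (i : ℕ) + 1 = n then 1 - (q ^ 4) ^ m else 1 - (q ^ 2) ^ m

lemma lowerY (hq0 : 0 < q) (hY : IsSigmaQFamily q Y)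
    (hann : ∀ i : Fin n, Y i.castSucc ξ = 0) (hξn : ‖ξ‖ = 1)
    (hev : Y (Fin.last n) ξ = lam • ξ) (hlam : ‖lam‖ = 1) (i : Fin n) :
    ∀ (m : ℕ) (k : Fin n → ℕ), (∀ j, j < i → k j = 0) → k i = m →
      Y i.castSucc (Wop Y k ξ)
        = ((cf q n i m : ℝ) : ℂ) • Wop Y (Function.update k i (m - 1)) ξ := by
  intro m
  induction m with
  | zero =>
    intro k hk h0
    rw [annY hq0 hY hann i k h0]
    have hcf : cf q n i 0 = 0 := by unfold cf; split <;> simp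
    rw [hcf, Nat.zero_sub, Complex.ofReal_zero, zero_smul]
  | succ m ih =>
    intro k hk h0
    set B : H →L[ℂ] H := adjoint (Y i.castSucc) with hBdef
    set k1 : Fin n → ℕ := Function.update k i m with hk1def
    have hk1lt : ∀ j, j < i → k1 j = 0 := fun j hj => by
      rw [hk1def, Function.update_apply, if_neg (Fin.ne_of_lt hj)]; exact hk j hj
    have hk1i : k1 i = m := by rw [hk1def, Function.update_self]
    have hWk : Wop Y k = B * Wop Y k1 := by
      have hE := Wop_extract_one (Y := Y) (k := k) (i := i) hk (by omega)
      rwa [h0, Nat.add_sub_cancel] at hE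
    have hupd1 : Function.update k1 i (m - 1) = Function.update k i (m - 1) := by
      rw [hk1def, Function.update_idem]
    have hIH : Y i.castSucc (Wop Y k1 ξ)
        = ((cf q n i m : ℝ) : ℂ) • Wop Y (Function.update k i (m - 1)) ξ := by
      rw [← hupd1]; exact ih k1 hk1lt hk1i
    have hBterm : ((cf q n i m : ℝ) : ℂ) • B (Wop Y (Function.update k i (m - 1)) ξ)
        = ((cf q n i m : ℝ) : ℂ) • Wop Y k1 ξ := by
      rcases Nat.eq_zero_or_pos m with hm | hm
      · subst hm
        have hcf : cf q n i 0 = 0 := by unfold cf; split <;> simp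
        rw [hcf]; simp
      · have hE := Wop_extract_one (Y := Y) (k := k1) (i := i) hk1lt (by omega)
        rw [hk1i, hupd1] at hE
        rw [hE]
        rfl
    set k0 : Fin n → ℕ := Function.update k i 0 with hk0def
    have hWk1 : Wop Y k1 = B ^ m * Wop Y k0 := by
      have hE := Wop_extract (Y := Y) (k := k1) (i := i) hk1lt
      rwa [hk1i, hk1def, Function.update_idem, ← hk0def] at hE
    -- commutator analysis
    by_cases hc : (i : ℕ) + 1 = n
    · -- i is the distinguished index: R4
      set C : H →L[ℂ] H := adjoint (Y (Fin.last n)) * Y (Fin.last n) with hCdef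
      have hcomm : Y i.castSucc * B = B * Y i.castSucc + ((1 - q ^ 4 : ℝ) : ℂ) • C := by
        have h4 := hY.2.2.2.1 i.castSucc (by simpa using hc)
        rw [sub_eq_iff_eq_add] at h4
        rw [hBdef, hCdef, h4]; exact add_comm _ _
      have hCB : C * B = ((q : ℂ) ^ 4) • (B * C) := by
        calc C * B = adjoint (Y (Fin.last n)) * (Y (Fin.last n) * B) := by
              rw [hCdef, mul_assoc]
        _ = adjoint (Y (Fin.last n)) * (((q : ℂ) ^ 2) • (B * Y (Fin.last n))) := by
              rw [hBdef, moveLast hq0 hY i hc]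
        _ = ((q : ℂ) ^ 2) • ((adjoint (Y (Fin.last n)) * B) * Y (Fin.last n)) := by
              rw [mul_smul_comm, mul_assoc]
        _ = ((q : ℂ) ^ 2) • ((((q : ℂ) ^ 2) • (B * adjoint (Y (Fin.last n)))) * Y (Fin.last n)) := by
              rw [hBdef, moveLastAdj hq0 hY i hc]
        _ = ((q : ℂ) ^ 4) • (B * C) := by
              rw [smul_mul_assoc, smul_smul, hCdef, mul_assoc]
              congr 1
              ring
      have hk0zero : ∀ j, k0 j = 0 := by
        intro j
        rcases eq_or_ne j i with hji | hji
        · rw [hk0def, hji, Function.update_self]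
        · rw [hk0def, Function.update_apply, if_neg hji]
          apply hk
          rw [Fin.lt_iff_val_lt_val]
          have h1 : (j : ℕ) < n := j.isLt
          have h2 : (j : ℕ) ≠ (i : ℕ) := fun hcc => hji (Fin.ext hcc)
          omega
      have hW0 : Wop Y k0 ξ = ξ := by
        rw [Wop_eq_one hk0zero, ContinuousLinearMap.one_apply]
      have hCfix : C (Wop Y k0 ξ) = Wop Y k0 ξ := by
        rw [hW0, hCdef, ContinuousLinearMap.mul_apply, hev, map_smul,
          adj_last_fix hY hξn hev hlam, smul_smul, Complex.mul_conj,
          Complex.normSq_eq_norm_sq, hlam]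
        norm_num
      have hCW1 : C (Wop Y k1 ξ) = (((q ^ 4 : ℝ) ^ m : ℝ) : ℂ) • Wop Y k1 ξ := by
        have hCBm := mul_pow_swap hCB m
        have happ := congrArg (fun T : H →L[ℂ] H => T (Wop Y k0 ξ)) hCBm
        simp only [ContinuousLinearMap.mul_apply, ContinuousLinearMap.smul_apply] at happ
        rw [hCfix] at happ
        have hWapp : (Wop Y k1) ξ = (B ^ m) ((Wop Y k0) ξ) := by rw [hWk1]; rfl
        rw [hWapp, happ]
        norm_cast
      -- put together
      have hmain : Y i.castSucc (Wop Y k ξ)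
          = ((cf q n i m + (1 - q ^ 4) * (q ^ 4) ^ m : ℝ) : ℂ) • Wop Y k1 ξ := by
        rw [hWk, ContinuousLinearMap.mul_apply,
          show Y i.castSucc (B (Wop Y k1 ξ)) = (Y i.castSucc * B) (Wop Y k1 ξ) from rfl,
          hcomm]
        simp only [ContinuousLinearMap.add_apply, ContinuousLinearMap.smul_apply,
          ContinuousLinearMap.mul_apply]
        rw [hIH, map_smul, hBterm, hCW1]
        rw [smul_smul, ← add_smul]
        norm_cast
      rw [hmain]
      have hcf : cf q n i (m + 1) = cf q n i m + (1 - q ^ 4) * (q ^ 4) ^ m := by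
        unfold cf
        rw [if_pos hc, if_pos hc, pow_succ]
        ring
      rw [hcf, Nat.add_sub_cancel, ← hk1def]
    · -- generic index: R3
      set C : H →L[ℂ] H := ∑ m' ∈ Finset.Ioi i.castSucc, adjoint (Y m') * Y m' with hCdef
      have hcomm : Y i.castSucc * B = B * Y i.castSucc + ((1 - q ^ 2 : ℝ) : ℂ) • C := by
        have h3 := hY.2.2.1 i.castSucc (by simpa using hc)
        rw [sub_eq_iff_eq_add] at h3
        rw [hBdef, hCdef, h3]; exact add_comm _ _
      have hCB : C * B = ((q : ℂ) ^ 2) • (B * C) := by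
        rw [hCdef, Finset.sum_mul]
        have hterm : ∀ m' ∈ Finset.Ioi i.castSucc,
            (adjoint (Y m') * Y m') * B = ((q : ℂ) ^ 2) • (B * (adjoint (Y m') * Y m')) := by
          intro m' hm'
          have hlt : i.castSucc < m' := Finset.mem_Ioi.mp hm'
          have hs : ¬((m' : ℕ) = n ∧ (i : ℕ) + 1 = n) := fun hcc => hc hcc.2
          calc (adjoint (Y m') * Y m') * B = adjoint (Y m') * (Y m' * B) := mul_assoc _ _ _
          _ = adjoint (Y m') * ((q : ℂ) • (B * Y m')) := by
                rw [hBdef, moveY hq0 hY m' i (ne_of_gt hlt) hs]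
          _ = (q : ℂ) • ((adjoint (Y m') * B) * Y m') := by rw [mul_smul_comm, mul_assoc]
          _ = (q : ℂ) • (((q : ℂ) • (B * adjoint (Y m'))) * Y m') := by
                rw [hBdef, moveYadj hq0 hY m' i hlt hs]
          _ = ((q : ℂ) ^ 2) • (B * (adjoint (Y m') * Y m')) := by
                rw [smul_mul_assoc, smul_smul, mul_assoc, ← pow_two]
        rw [Finset.sum_congr rfl hterm, ← Finset.smul_sum, ← Finset.mul_sum]
      have hCfix : C (Wop Y k0 ξ) = Wop Y k0 ξ := by
        rw [hCdef]
        apply T_fix hq0 hY hann i k0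
        intro j hj
        rcases eq_or_ne j i with hji | hji
        · rw [hk0def, hji, Function.update_self]
        · rw [hk0def, Function.update_apply, if_neg hji]
          exact hk j (lt_of_le_of_ne hj hji)
      have hCW1 : C (Wop Y k1 ξ) = (((q ^ 2 : ℝ) ^ m : ℝ) : ℂ) • Wop Y k1 ξ := by
        have hCBm := mul_pow_swap hCB m
        have happ := congrArg (fun T : H →L[ℂ] H => T (Wop Y k0 ξ)) hCBm
        simp only [ContinuousLinearMap.mul_apply, ContinuousLinearMap.smul_apply] at happ
        rw [hCfix] at happ
        have hWapp : (Wop Y k1) ξ = (B ^ m) ((Wop Y k0) ξ) := by rw [hWk1]; rfl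
        rw [hWapp, happ]
        norm_cast
      have hmain : Y i.castSucc (Wop Y k ξ)
          = ((cf q n i m + (1 - q ^ 2) * (q ^ 2) ^ m : ℝ) : ℂ) • Wop Y k1 ξ := by
        rw [hWk, ContinuousLinearMap.mul_apply,
          show Y i.castSucc (B (Wop Y k1 ξ)) = (Y i.castSucc * B) (Wop Y k1 ξ) from rfl,
          hcomm]
        simp only [ContinuousLinearMap.add_apply, ContinuousLinearMap.smul_apply,
          ContinuousLinearMap.mul_apply]
        rw [hIH, map_smul, hBterm, hCW1]
        rw [smul_smul, ← add_smul]
        norm_cast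
      rw [hmain]
      have hcf : cf q n i (m + 1) = cf q n i m + (1 - q ^ 2) * (q ^ 2) ^ m := by
        unfold cf
        rw [if_neg hc, if_neg hc, pow_succ]
        ring
      rw [hcf, Nat.add_sub_cancel, ← hk1def]

lemma lowerY' (hq0 : 0 < q) (hY : IsSigmaQFamily q Y)
    (hann : ∀ i : Fin n, Y i.castSucc ξ = 0) (hξn : ‖ξ‖ = 1)
    (hev : Y (Fin.last n) ξ = lam • ξ) (hlam : ‖lam‖ = 1) (i : Fin n) (k : Fin n → ℕ) :
    Y i.castSucc (Wop Y k ξ)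
      = ((q ^ (∑ j ∈ Finset.Iio i, k j) * cf q n i (k i) : ℝ) : ℂ) •
          Wop Y (Function.update k i (k i - 1)) ξ := by
  set kf : Fin n → ℕ := fun j => if (j : ℕ) < (i : ℕ) then k j else 0 with hkf
  set kt : Fin n → ℕ := fun j => if (j : ℕ) < (i : ℕ) then 0 else k j with hkt
  have hsplit : Wop Y k = Wop Y kf * Wop Y kt := Wop_split k i
  have hkti : kt i = k i := if_neg (Nat.lt_irrefl _)
  have hktlt : ∀ j, j < i → kt j = 0 := fun j hj => if_pos hj
  have hIio : Finset.univ.filter (fun j : Fin n => (j : ℕ) < (i : ℕ)) = Finset.Iio i := by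
    ext j
    simp only [Finset.mem_filter, Finset.mem_univ, true_and, Finset.mem_Iio]
    exact (Fin.lt_iff_val_lt_val).symm
  have hfront : Y i.castSucc * Wop Y kf
      = ((q : ℂ) ^ (∑ j ∈ Finset.Iio i, k j)) • (Wop Y kf * Y i.castSucc) := by
    have h := mul_Wop_swap (Y := Y) (Y i.castSucc) kf (fun j => (q : ℂ) ^ (kf j)) ?_
    · rw [h]
      congr 1
      rw [Finset.prod_pow_eq_pow_sum]
      congr 1
      rw [← hIio, Finset.sum_filter]
    · intro j
      by_cases hj : (j : ℕ) < (i : ℕ)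
      · have hkfj : kf j = k j := if_pos hj
        refine mul_pow_swap (moveY hq0 hY i.castSucc j ?_ ?_) _
        · intro he
          have := congrArg (fun x : Fin (n + 1) => (x : ℕ)) he
          simp only [Fin.coe_castSucc] at this
          omega
        · simp only [Fin.coe_castSucc]
          exact fun hcc => absurd hcc.1 (Nat.ne_of_lt i.isLt)
      · have hkfj : kf j = 0 := if_neg hj
        simp only [hkfj, pow_zero, mul_one, one_mul, one_smul]
  have happ := congrArg (fun T : H →L[ℂ] H => T (Wop Y kt ξ)) hfront
  simp only [ContinuousLinearMap.mul_apply, ContinuousLinearMap.smul_apply] at happ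
  have hlow := lowerY hq0 hY hann hξn hev hlam i (k i) kt hktlt hkti
  have hsplit2 : Wop Y kf (Wop Y (Function.update kt i (k i - 1)) ξ)
      = Wop Y (Function.update k i (k i - 1)) ξ := by
    have hS := Wop_split (Y := Y) (Function.update k i (k i - 1)) i
    have e1 : (fun j : Fin n => if (j : ℕ) < (i : ℕ)
        then Function.update k i (k i - 1) j else 0) = kf := by
      funext j
      by_cases hj : (j : ℕ) < (i : ℕ)
      · have hne : j ≠ i := fun he => by subst he; omega
        rw [if_pos hj, Function.update_apply, if_neg hne]
        exact (if_pos hj).symm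
      · rw [if_neg hj]
        exact (if_neg hj).symm
    have e2 : (fun j : Fin n => if (j : ℕ) < (i : ℕ)
        then 0 else Function.update k i (k i - 1) j) = Function.update kt i (k i - 1) := by
      funext j
      rcases eq_or_ne j i with rfl | hne
      · rw [if_neg (Nat.lt_irrefl _), Function.update_self, Function.update_self]
      · rw [Function.update_apply, if_neg hne, Function.update_apply, if_neg hne]
    rw [hS, e1, e2, ContinuousLinearMap.mul_apply]
  rw [hsplit, ContinuousLinearMap.mul_apply, happ, hlow, map_smul, smul_smul, hsplit2]
  congr 1
  push_cast
  ring

/-- The normalization constant. -/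
def NRfun (q : ℝ) {n : ℕ} (k : Fin n → ℕ) : ℝ :=
  ∏ i : Fin n, if (i : ℕ) + 1 = n then qPoch (q ^ 4) (q ^ 4) (k i)
    else qPoch (q ^ 2) (q ^ 2) (k i)

lemma qPoch_succ (a : ℝ) (m : ℕ) : qPoch a a (m + 1) = qPoch a a m * (1 - a ^ (m + 1)) := by
  unfold qPoch
  rw [Finset.prod_range_succ, pow_succ']

lemma qPoch_pos {a : ℝ} (ha0 : 0 ≤ a) (ha1 : a < 1) (m : ℕ) : 0 < qPoch a a m := by
  unfold qPoch
  apply Finset.prod_pos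
  intro r _
  have h1 : a ^ (r + 1) < 1 := pow_lt_one₀ ha0 ha1 (Nat.succ_ne_zero r)
  rw [← pow_succ'] at *
  linarith

lemma NR_pos (hq0 : 0 < q) (hq1 : q < 1) (k : Fin n → ℕ) : 0 < NRfun q k := by
  apply Finset.prod_pos
  intro i _
  have h2 : q ^ 2 < 1 := pow_lt_one₀ hq0.le hq1 two_ne_zero
  have h4 : q ^ 4 < 1 := pow_lt_one₀ hq0.le hq1 (by norm_num)
  have h2' : (0:ℝ) ≤ q ^ 2 := by positivity
  have h4' : (0:ℝ) ≤ q ^ 4 := by positivity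
  split
  · exact qPoch_pos h4' h4 _
  · exact qPoch_pos h2' h2 _

lemma cf_mul_NR (i : Fin n) (k : Fin n → ℕ) (hki : k i ≠ 0) :
    cf q n i (k i) * NRfun q (Function.update k i (k i - 1)) = NRfun q k := by
  set F : Fin n → ℕ → ℝ := fun l m => if (l : ℕ) + 1 = n then qPoch (q ^ 4) (q ^ 4) m
    else qPoch (q ^ 2) (q ^ 2) m with hF
  have hNR : ∀ c : Fin n → ℕ, NRfun q c = ∏ l, F l (c l) := fun c => rfl
  have hupd : (fun l => F l (Function.update k i (k i - 1) l))
      = Function.update (fun l => F l (k l)) i (F i (k i - 1)) := by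
    funext l
    rcases eq_or_ne l i with rfl | hl
    · rw [Function.update_self, Function.update_self]
    · rw [Function.update_apply, if_neg hl, Function.update_apply, if_neg hl]
  rw [hNR, hNR, hupd, Finset.prod_update_of_mem (Finset.mem_univ i),
    Finset.sdiff_singleton_eq_erase,
    ← Finset.mul_prod_erase Finset.univ (fun l => F l (k l)) (Finset.mem_univ i),
    ← mul_assoc]
  congr 1
  obtain ⟨m, hm⟩ : ∃ m, k i = m + 1 := ⟨k i - 1, by omega⟩
  rw [hm, Nat.add_sub_cancel]
  unfold cf
  by_cases hc : (i : ℕ) + 1 = n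
  · simp only [hF, if_pos hc]
    rw [qPoch_succ]
    ring
  · simp only [hF, if_neg hc]
    rw [qPoch_succ]
    ring

lemma innerW (hq0 : 0 < q) (hq1 : q < 1) (hY : IsSigmaQFamily q Y)
    (hann : ∀ i : Fin n, Y i.castSucc ξ = 0) (hξn : ‖ξ‖ = 1)
    (hev : Y (Fin.last n) ξ = lam • ξ) (hlam : ‖lam‖ = 1) :
    ∀ (N : ℕ) (j k : Fin n → ℕ), (∑ i, j i) = N →
      (inner ℂ (Wop Y j ξ) (Wop Y k ξ) : ℂ) = if j = k then ((NRfun q k : ℝ) : ℂ) else 0 := by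
  intro N
  induction N using Nat.strong_induction_on with
  | _ N IH =>
    intro j k hN
    by_cases hj0 : ∀ i, j i = 0
    · rw [Wop_eq_one hj0, ContinuousLinearMap.one_apply]
      by_cases hk0 : ∀ i, k i = 0
      · rw [Wop_eq_one hk0, ContinuousLinearMap.one_apply]
        have hjk : j = k := funext fun i => by rw [hj0 i, hk0 i]
        rw [if_pos hjk]
        have hNR1 : NRfun q k = 1 :=
          Finset.prod_eq_one fun i _ => by rw [hk0 i]; split <;> rfl
        rw [hNR1, inner_self_eq_norm_sq_to_K, hξn]
        norm_num
      · push_neg at hk0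
        obtain ⟨i0, hi0⟩ := hk0
        obtain ⟨i, himem, hle⟩ := Finset.exists_min_image
          (Finset.univ.filter (fun i : Fin n => k i ≠ 0)) id ⟨i0, by simp [hi0]⟩
        have hki : k i ≠ 0 := (Finset.mem_filter.mp himem).2
        have hmin : ∀ l, l < i → k l = 0 := by
          intro l hl
          by_contra hne
          exact absurd (hle l (by simp [hne])) (not_le.mpr hl)
        have hE := Wop_extract (Y := Y) (k := k) (i := i) hmin
        obtain ⟨m, hm⟩ : ∃ m, k i = m + 1 := ⟨k i - 1, by omega⟩
        have hzero : (inner ℂ ξ (Wop Y k ξ) : ℂ) = 0 := by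
          rw [hE, hm, pow_succ', ContinuousLinearMap.mul_apply,
            ContinuousLinearMap.mul_apply, adjoint_inner_right, hann i,
            inner_zero_left]
        rw [hzero, if_neg (fun he => hki (by rw [← he, hj0 i]))]
    · push_neg at hj0
      obtain ⟨i0, hi0⟩ := hj0
      obtain ⟨i, himem, hle⟩ := Finset.exists_min_image
        (Finset.univ.filter (fun i : Fin n => j i ≠ 0)) id ⟨i0, by simp [hi0]⟩
      have hji : j i ≠ 0 := (Finset.mem_filter.mp himem).2
      have hmin : ∀ l, l < i → j l = 0 := by
        intro l hl
        by_contra hne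
        exact absurd (hle l (by simp [hne])) (not_le.mpr hl)
      set j1 : Fin n → ℕ := Function.update j i (j i - 1) with hj1
      set k1 : Fin n → ℕ := Function.update k i (k i - 1) with hk1
      have hE := Wop_extract_one (Y := Y) (k := j) (i := i) hmin hji
      have hstep : (inner ℂ (Wop Y j ξ) (Wop Y k ξ) : ℂ)
          = ((q ^ (∑ l ∈ Finset.Iio i, k l) * cf q n i (k i) : ℝ) : ℂ)
              * (inner ℂ (Wop Y j1 ξ) (Wop Y k1 ξ) : ℂ) := by
        rw [hE, ContinuousLinearMap.mul_apply, adjoint_inner_left,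
          lowerY' hq0 hY hann hξn hev hlam i k, inner_smul_right]
      have hsumlt : (∑ l, j1 l) < N := by
        have h1 : ∑ l, j1 l = (j i - 1) + ∑ l ∈ Finset.univ \ {i}, j l := by
          rw [hj1]
          exact Finset.sum_update_of_mem (Finset.mem_univ i) j (j i - 1)
        rw [Finset.sdiff_singleton_eq_erase] at h1
        have h2 : j i + ∑ l ∈ Finset.univ.erase i, j l = ∑ l, j l :=
          Finset.add_sum_erase Finset.univ j (Finset.mem_univ i)
        omega
      rw [hstep, IH _ hsumlt j1 k1 rfl]
      by_cases hki : k i = 0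
      · have hne : j ≠ k := fun he => hji (by rw [he, hki])
        have hcoef : ((q ^ (∑ l ∈ Finset.Iio i, k l) * cf q n i (k i) : ℝ) : ℂ) = 0 := by
          have hcf : cf q n i (k i) = 0 := by
            rw [hki]; unfold cf; split <;> simp
          rw [hcf, mul_zero, Complex.ofReal_zero]
        rw [hcoef, zero_mul, if_neg hne]
      · by_cases hjk : j = k
        · have h11 : j1 = k1 := by rw [hj1, hk1, hjk]
          rw [if_pos h11, if_pos hjk]
          have hsz : (∑ l ∈ Finset.Iio i, k l) = 0 :=
            Finset.sum_eq_zero fun l hl => by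
              rw [← hjk]; exact hmin l (Finset.mem_Iio.mp hl)
          rw [hsz, pow_zero, one_mul]
          rw [← cf_mul_NR i k hki, ← hk1]
          push_cast
          ring
        · have h11 : j1 ≠ k1 := by
            intro he
            apply hjk
            funext l
            have hel := congrFun he l
            rcases eq_or_ne l i with rfl | hne
            · rw [hj1, hk1, Function.update_self, Function.update_self] at hel
              omega
            · rwa [hj1, hk1, Function.update_apply, if_neg hne,
                Function.update_apply, if_neg hne] at hel
          rw [if_neg h11, if_neg hjk]
          simp

end Main

/-- The family `{|k⟩_ξ : k ∈ ℕⁿ}` is orthonormal. -/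
theorem ket_orthonormal (q : ℝ) (hq0 : 0 < q) (hq1 : q < 1) (n : ℕ) (hn : 1 ≤ n)
    {H : Type*} [NormedAddCommGroup H] [InnerProductSpace ℂ H] [CompleteSpace H]
    (Y : Fin (n + 1) → H →L[ℂ] H) (hY : IsSigmaQFamily q Y)
    (ξ : H) (hξ : ‖ξ‖ = 1) (hann : ∀ i : Fin n, Y i.castSucc ξ = 0)
    (lam : ℂ) (hev : Y (Fin.last n) ξ = lam • ξ) (hlam : ‖lam‖ = 1) :
    ∀ j k : Fin n → ℕ,
      (inner ℂ (ket q Y ξ j) (ket q Y ξ k) : ℂ) = if j = k then 1 else 0 := by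
  intro j k
  have hket : ∀ m : Fin n → ℕ, ket q Y ξ m
      = (((Real.sqrt (NRfun q m))⁻¹ : ℝ) : ℂ) • Wop Y m ξ := fun m => rfl
  rw [hket j, hket k, inner_smul_left, inner_smul_right,
    innerW hq0 hq1 hY hann hξ hev hlam (∑ i, j i) j k rfl, Complex.conj_ofReal]
  by_cases hjk : j = k
  · subst hjk
    rw [if_pos rfl, if_pos rfl]
    have hpos := NR_pos hq0 hq1 j
    have hre : (Real.sqrt (NRfun q j))⁻¹ * ((Real.sqrt (NRfun q j))⁻¹ * NRfun q j) = 1 := by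
      rw [← mul_assoc, ← mul_inv, Real.mul_self_sqrt hpos.le]
      exact inv_mul_cancel₀ (ne_of_gt hpos)
    exact_mod_cast hre
  · rw [if_neg hjk, if_neg hjk, mul_zero, mul_zero]
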